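/- Let 𝒰 be a nonprincipal ultrafilter on ℕ and let 1 ≤ p < ∞. Then the ultrapower (ℓ^p)^𝒰 of the space ℓ^p of p-summable complex sequences contains an isometric copy of ℓ^p(I) for an index set I of cardinality 2^ℵ₀; that is, there is a linear isometric embedding of ℓ^p(I) into (ℓ^p)^𝒰 where I has the cardinality of the continuum. -/

import Mathlib

set_option maxHeartbeats 1000000
set_option synthInstance.maxHeartbeats 1000000


/-!
Ultrapowers of normed spaces along a nonprincipal ultrafilter `𝒰` on `ℕ`.

`BoundedSeq X = ℓ∞(X)` is the normed space of bounded sequences in `X` with the sup norm,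
`nullSeq 𝕜 𝒰 X = c_𝒰(X)` is the subspace of sequences whose norms tend to `0` along `𝒰`,
and `Ultrapower 𝕜 𝒰 X = ℓ∞(X)/c_𝒰(X)` is the ultrapower, with quotient map `up 𝕜 𝒰`.

The canonical linear isometry `j : (X*)^𝒰 → (X^𝒰)*` sends the class of a (bounded)
sequence of functionals `(f_n)` to the functional `(x_n)^𝒰 ↦ lim_{n→𝒰} f_n(x_n)`; hence a
functional `φ` on `X^𝒰` lies in the image of `j` if and only if there is a bounded
sequence `(f_n)` in `X*` with `φ((x_n)^𝒰) = lim_{n→𝒰} f_n(x_n)` for every bounded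
sequence `(x_n)`.  This is the predicate `InCanonicalImage` below.
-/

open Filter Topology
open scoped ENNReal

noncomputable section

/-- The normed space `ℓ∞(X)` of bounded sequences in `X`, with the sup norm. -/
abbrev BoundedSeq (X : Type*) [NormedAddCommGroup X] := lp (fun _ : ℕ => X) ∞

variable (𝕜 : Type*) [NontriviallyNormedField 𝕜]

/-- `c_𝒰(X)`: the subspace of bounded sequences tending to zero in norm along `𝒰`. -/
def nullSeq (𝒰 : Ultrafilter ℕ) (X : Type*) [NormedAddCommGroup X] [NormedSpace 𝕜 X] :
    Submodule 𝕜 (BoundedSeq X) where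
  carrier := {f | Tendsto (fun n => ‖f n‖) 𝒰 (𝓝 0)}
  zero_mem' := by simp [tendsto_const_nhds]
  add_mem' := by
    intro f g hf hg
    have h := hf.add hg
    rw [add_zero] at h
    exact squeeze_zero (fun n => norm_nonneg _) (fun n => norm_add_le _ _) h
  smul_mem' := by
    intro c f hf
    have h := hf.const_mul ‖c‖
    rw [mul_zero] at h
    exact squeeze_zero (fun n => norm_nonneg _) (fun n => by simp [norm_smul]) h

/-- The ultrapower `X^𝒰 = ℓ∞(X)/c_𝒰(X)`. -/
abbrev Ultrapower (𝒰 : Ultrafilter ℕ) (X : Type*) [NormedAddCommGroup X] [NormedSpace 𝕜 X] :=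
  BoundedSeq X ⧸ nullSeq 𝕜 𝒰 X

/-- The quotient map `ℓ∞(X) → X^𝒰`, `(x_n) ↦ (x_n)^𝒰`. -/
def up (𝒰 : Ultrafilter ℕ) {X : Type*} [NormedAddCommGroup X] [NormedSpace 𝕜 X]
    (f : BoundedSeq X) : Ultrapower 𝕜 𝒰 X := Submodule.Quotient.mk f

/-- `φ : (X^𝒰)*` lies in the image of the canonical linear isometry
`j : (X*)^𝒰 → (X^𝒰)*` iff it is induced by a bounded sequence of functionals on `X`. -/
def InCanonicalImage (𝒰 : Ultrafilter ℕ) {X : Type*} [NormedAddCommGroup X] [NormedSpace 𝕜 X]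
    (φ : StrongDual 𝕜 (Ultrapower 𝕜 𝒰 X)) : Prop :=
  ∃ f : ℕ → StrongDual 𝕜 X, (∃ C : ℝ, ∀ n, ‖f n‖ ≤ C) ∧
    ∀ x : BoundedSeq X, Tendsto (fun n => f n (x n)) 𝒰 (𝓝 (φ (up 𝕜 𝒰 x)))

/-! ### Auxiliary material for Statement 5 -/

section UltrapowerAux

variable {𝕜}

theorem mem_nullSeq_iff {𝒰 : Ultrafilter ℕ} {X : Type*} [NormedAddCommGroup X]
    [NormedSpace 𝕜 X] {f : BoundedSeq X} :
    f ∈ nullSeq 𝕜 𝒰 X ↔ Tendsto (fun n => ‖f n‖) 𝒰 (𝓝 0) := Iff.rfl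

theorem up_eq_mk {𝒰 : Ultrafilter ℕ} {X : Type*} [NormedAddCommGroup X] [NormedSpace 𝕜 X]
    (f : BoundedSeq X) : up 𝕜 𝒰 f = Submodule.Quotient.mk f := rfl

instance nullSeq_isClosed (𝒰 : Ultrafilter ℕ) (X : Type*) [NormedAddCommGroup X]
    [NormedSpace 𝕜 X] :
    IsClosed ((nullSeq 𝕜 𝒰 X : Submodule 𝕜 (BoundedSeq X)) : Set (BoundedSeq X)) := by
  refine isClosed_of_closure_subset fun f hf => ?_
  rw [SetLike.mem_coe, mem_nullSeq_iff, Metric.tendsto_nhds]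
  intro ε hε
  obtain ⟨g, hg, hfg⟩ := Metric.mem_closure_iff.1 hf (ε / 2) (by linarith)
  rw [SetLike.mem_coe, mem_nullSeq_iff] at hg
  have hg' : ∀ᶠ n in 𝒰, ‖g n‖ < ε / 2 := by
    have := Metric.tendsto_nhds.1 hg (ε / 2) (by linarith)
    simpa [Real.dist_eq, abs_of_nonneg (norm_nonneg _)] using this
  filter_upwards [hg'] with n hn
  have h1 : ‖f n - g n‖ ≤ dist f g := by
    rw [dist_eq_norm]
    simpa [lp.coeFn_sub] using lp.norm_apply_le_norm (ENNReal.top_ne_zero) (f - g) n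
  have h2 : ‖f n‖ ≤ ‖g n‖ + ‖f n - g n‖ := by
    calc ‖f n‖ = ‖g n + (f n - g n)‖ := by rw [show g n + (f n - g n) = f n by abel]
    _ ≤ ‖g n‖ + ‖f n - g n‖ := norm_add_le _ _
  rw [Real.dist_eq, sub_zero, abs_of_nonneg (norm_nonneg _)]
  linarith

theorem norm_up_eq (𝒰 : Ultrafilter ℕ) {X : Type*} [NormedAddCommGroup X] [NormedSpace 𝕜 X]
    (f : BoundedSeq X) {L : ℝ} (hL : Tendsto (fun n => ‖f n‖) 𝒰 (𝓝 L)) :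
    ‖up 𝕜 𝒰 f‖ = L := by
  have hL0 : 0 ≤ L := ge_of_tendsto hL (Filter.Eventually.of_forall fun n => norm_nonneg _)
  refine le_antisymm (le_of_forall_pos_le_add fun ε hε => ?_)
    (le_of_forall_pos_le_add fun ε hε => ?_)
  · have hA : ∀ᶠ n in 𝒰, ‖f n‖ < L + ε := hL.eventually_lt_const (by linarith)
    have hmem : Memℓp (fun n => if ‖f n‖ < L + ε then f n else 0) ∞ := by
      apply memℓp_infty
      refine ⟨L + ε, ?_⟩
      rintro x ⟨n, rfl⟩
      dsimp only
      split_ifs with h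
      · exact h.le
      · simp only [norm_zero]
        linarith
    set g : BoundedSeq X := ⟨_, hmem⟩ with hgdef
    have hcoe : ∀ n, g n = if ‖f n‖ < L + ε then f n else 0 := fun _ => rfl
    have hfg : f - g ∈ nullSeq 𝕜 𝒰 X := by
      rw [mem_nullSeq_iff]
      have h0 : ∀ᶠ n in 𝒰, ‖(f - g) n‖ = 0 := by
        filter_upwards [hA] with n hn
        simp [lp.coeFn_sub, Pi.sub_apply, hcoe n, if_pos hn]
      exact tendsto_const_nhds.congr' (h0.mono fun n h => h.symm)
    have hq : up 𝕜 𝒰 f = up 𝕜 𝒰 g := by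
      rw [up_eq_mk, up_eq_mk]
      exact (Submodule.Quotient.eq (nullSeq 𝕜 𝒰 X)).2 hfg
    rw [hq, up_eq_mk]
    refine le_trans (Submodule.Quotient.norm_mk_le _ _) ?_
    refine lp.norm_le_of_forall_le (by linarith) fun n => ?_
    rw [hcoe n]
    split_ifs with h
    · exact h.le
    · simp only [norm_zero]
      linarith
  · obtain ⟨m, hm, hm'⟩ := Submodule.Quotient.norm_mk_lt (S := nullSeq 𝕜 𝒰 X) (up 𝕜 𝒰 f) hε
    have hmf : m - f ∈ nullSeq 𝕜 𝒰 X := by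
      rw [up_eq_mk] at hm
      exact (Submodule.Quotient.eq (nullSeq 𝕜 𝒰 X)).1 hm
    rw [mem_nullSeq_iff] at hmf
    have h2 : Tendsto (fun n => ‖f n‖ - ‖(m - f) n‖) 𝒰 (𝓝 (L - 0)) := hL.sub hmf
    have h3 : ∀ n, ‖f n‖ - ‖(m - f) n‖ ≤ ‖m‖ := fun n => by
      have ha := lp.norm_apply_le_norm (ENNReal.top_ne_zero) m n
      have hb : ‖(m - f) n‖ = ‖f n - m n‖ := by
        simp [lp.coeFn_sub, Pi.sub_apply, norm_sub_rev]
      have hc : ‖f n‖ - ‖m n‖ ≤ ‖f n - m n‖ := norm_sub_norm_le _ _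
      linarith
    have h4 : L - 0 ≤ ‖m‖ := le_of_tendsto h2 (Filter.Eventually.of_forall h3)
    linarith

/-- An almost disjoint family of "diagonal" index maps `ℕ → ℕ`, indexed by `ℝ`. -/
def sig (r : ℝ) (n : ℕ) : ℕ := ⌊(n : ℝ) * Real.exp r⌋₊

theorem sig_eventually_ne {r s : ℝ} (h : r < s) :
    ∀ᶠ n in Filter.atTop, sig r n ≠ sig s n := by
  have hab : Real.exp r < Real.exp s := Real.exp_lt_exp.2 h
  have hd : 0 < Real.exp s - Real.exp r := by linarith
  filter_upwards [Filter.eventually_ge_atTop (⌈(Real.exp s - Real.exp r)⁻¹⌉₊ + 1)] with n hn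
  have hn' : (Real.exp s - Real.exp r)⁻¹ ≤ (n : ℝ) := by
    refine le_trans (Nat.le_ceil _) ?_
    exact_mod_cast le_trans (Nat.le_succ _) hn
  have h1 : 1 ≤ (n : ℝ) * (Real.exp s - Real.exp r) := by
    have := mul_le_mul_of_nonneg_right hn' hd.le
    rwa [inv_mul_cancel₀ hd.ne'] at this
  have key : (n : ℝ) * Real.exp r + 1 ≤ (n : ℝ) * Real.exp s := by nlinarith
  have h0 : (0 : ℝ) ≤ (n : ℝ) * Real.exp r := by positivity
  have hlt : sig r n < sig s n := by
    have h5 := Nat.floor_le_floor key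
    rw [Nat.floor_add_one h0] at h5
    exact h5
  exact hlt.ne

theorem sig_injOn (F : Finset ℝ) :
    ∀ᶠ n in Filter.atTop, Set.InjOn (fun r => sig r n) ↑F := by
  have h : ∀ᶠ n in Filter.atTop, ∀ r ∈ F, ∀ s ∈ F, r < s → sig r n ≠ sig s n := by
    rw [Filter.eventually_all_finset]
    intro r _
    rw [Filter.eventually_all_finset]
    intro s _
    by_cases hrs : r < s
    · exact (sig_eventually_ne hrs).mono fun n hn _ => hn
    · exact Filter.Eventually.of_forall fun n h' => absurd h' hrs
  refine h.mono fun n hn a ha b hb hab => ?_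
  by_contra hne
  rcases lt_or_gt_of_ne hne with h' | h'
  · exact hn a ha b hb h' hab
  · exact hn b hb a ha h' hab.symm

theorem rpow_inv_eq_of_rpow_eq {a b : ℝ} (ha : 0 ≤ a) {e : ℝ} (he : 0 < e) (h : a ^ e = b) :
    a = b ^ (1 / e) := by
  rw [← h, ← Real.rpow_mul ha, mul_one_div_cancel he.ne', Real.rpow_one]

theorem norm_sum_single_of_injOn {p : ℝ≥0∞} (hpt : 0 < p.toReal) (F : Finset ℝ) (c : ℝ → ℂ)
    {n : ℕ} (hinj : Set.InjOn (fun r => sig r n) ↑F) :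
    ‖(∑ r ∈ F, lp.single p (sig r n) (c r) : lp (fun _ : ℕ => ℂ) p)‖ ^ p.toReal
      = ∑ r ∈ F, ‖c r‖ ^ p.toReal := by
  classical
  set g : ℕ → ℂ := fun k => if h : ∃ r ∈ F, sig r n = k then c h.choose else 0 with hg
  have hge : ∀ r ∈ F, g (sig r n) = c r := by
    intro r hr
    have hex : ∃ r' ∈ F, sig r' n = sig r n := ⟨r, hr, rfl⟩
    rw [hg]
    dsimp only
    rw [dif_pos hex]
    obtain ⟨hr', hs⟩ := hex.choose_spec
    rw [hinj hr' hr hs]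
  have hinj' : ∀ a ∈ F, ∀ b ∈ F, sig a n = sig b n → a = b := fun a ha b hb h =>
    hinj ha hb h
  have h1 : (∑ k ∈ F.image (fun r => sig r n), lp.single p k (g k) : lp (fun _ : ℕ => ℂ) p)
      = ∑ r ∈ F, lp.single p (sig r n) (c r) := by
    rw [Finset.sum_image hinj']
    exact Finset.sum_congr rfl fun r hr => by rw [hge r hr]
  have h2 : ∑ k ∈ F.image (fun r => sig r n), ‖g k‖ ^ p.toReal
      = ∑ r ∈ F, ‖c r‖ ^ p.toReal := by
    rw [Finset.sum_image hinj']
    exact Finset.sum_congr rfl fun r hr => by rw [hge r hr]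
  rw [← h1, ← h2]
  exact lp.norm_sum_single hpt g _

/-- The basic vectors of the ultrapower: the class of `n ↦ e_{σ_r(n)}`. -/
def vseq (p : ℝ≥0∞) [Fact (1 ≤ p)] (hpt : 0 < p.toReal) (r : ℝ) : BoundedSeq (lp (fun _ : ℕ => ℂ) p) :=
  ⟨fun n => lp.single p (sig r n) (1 : ℂ), memℓp_infty ⟨1, by
    rintro x ⟨n, rfl⟩
    simpa using (lp.norm_single (E := fun _ : ℕ => ℂ) (ENNReal.toReal_pos_iff.1 hpt).1 (sig r n) (1 : ℂ)).le⟩⟩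

theorem norm_sum_smul_v {p : ℝ≥0∞} [Fact (1 ≤ p)] (hpt : 0 < p.toReal)
    (𝒰 : Ultrafilter ℕ) (h𝒰 : (𝒰 : Filter ℕ) ≤ Filter.cofinite)
    (F : Finset ℝ) (c : ℝ → ℂ) :
    ‖∑ r ∈ F, c r • up ℂ 𝒰 (vseq p hpt r)‖
      = (∑ r ∈ F, ‖c r‖ ^ p.toReal) ^ (1 / p.toReal) := by
  have hup : ∀ y : BoundedSeq (lp (fun _ : ℕ => ℂ) p),
      up ℂ 𝒰 y = (nullSeq ℂ 𝒰 _).mkQ y := fun y => rfl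
  rw [show ∑ r ∈ F, c r • up ℂ 𝒰 (vseq p hpt r)
      = up ℂ 𝒰 (∑ r ∈ F, c r • vseq p hpt r) by
    simp only [hup, ← map_smul, ← map_sum]]
  refine norm_up_eq 𝒰 _ ?_
  have hevent : ∀ᶠ n in Filter.atTop,
      ‖(∑ r ∈ F, c r • vseq p hpt r) n‖
        = (∑ r ∈ F, ‖c r‖ ^ p.toReal) ^ (1 / p.toReal) := by
    filter_upwards [sig_injOn F] with n hn
    have hcoord : (∑ r ∈ F, c r • vseq p hpt r) n
        = ∑ r ∈ F, lp.single p (sig r n) (c r) := by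
      simp only [lp.coeFn_sum, Finset.sum_apply, lp.coeFn_smul, Pi.smul_apply]
      refine Finset.sum_congr rfl fun r _ => ?_
      rw [show (vseq p hpt r) n = lp.single p (sig r n) (1 : ℂ) from rfl, ← lp.single_smul]
      simp
    rw [hcoord]
    exact rpow_inv_eq_of_rpow_eq (norm_nonneg _) hpt (norm_sum_single_of_injOn hpt F c hn)
  have hevent𝒰 : ∀ᶠ n in 𝒰,
      ‖(∑ r ∈ F, c r • vseq p hpt r) n‖
        = (∑ r ∈ F, ‖c r‖ ^ p.toReal) ^ (1 / p.toReal) :=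
    hevent.filter_mono (le_trans h𝒰 (le_of_eq Nat.cofinite_eq_atTop))
  exact tendsto_const_nhds.congr' (hevent𝒰.mono fun n h => h.symm)

end UltrapowerAux

/-- For `1 ≤ p < ∞`, the ultrapower `(ℓ^p)^𝒰` contains an isometric
copy of `ℓ^p(I)` for an index set `I` of cardinality `2^ℵ₀`. -/
theorem ultrapower_lp_contains_lp_continuum
    (𝒰 : Ultrafilter ℕ) (h𝒰 : (𝒰 : Filter ℕ) ≤ Filter.cofinite)
    (p : ℝ≥0∞) [Fact (1 ≤ p)] (hp : p ≠ ∞) :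
    ∃ (I : Type) (_ : Cardinal.mk I = (2 : Cardinal) ^ Cardinal.aleph0),
      Nonempty (lp (fun _ : I => ℂ) p →ₗᵢ[ℂ]
        Ultrapower ℂ 𝒰 (lp (fun _ : ℕ => ℂ) p)) := by
  have hpt : 0 < p.toReal :=
    ENNReal.toReal_pos (lt_of_lt_of_le zero_lt_one (Fact.out : 1 ≤ p)).ne' hp
  refine ⟨ℝ, by rw [Cardinal.mk_real, ← Cardinal.two_power_aleph0], ⟨?_⟩⟩
  set v : ℝ → Ultrapower ℂ 𝒰 (lp (fun _ : ℕ => ℂ) p) := fun r => up ℂ 𝒰 (vseq p hpt r) with hv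
  have hnormsum : ∀ (F : Finset ℝ) (c : ℝ → ℂ),
      ‖∑ r ∈ F, c r • v r‖ = (∑ r ∈ F, ‖c r‖ ^ p.toReal) ^ (1 / p.toReal) :=
    fun F c => norm_sum_smul_v hpt 𝒰 h𝒰 F c
  have sum_nonneg' : ∀ (x : lp (fun _ : ℝ => ℂ) p) (t : Finset ℝ),
      0 ≤ ∑ r ∈ t, ‖x r‖ ^ p.toReal :=
    fun x t => Finset.sum_nonneg fun _ _ => Real.rpow_nonneg (norm_nonneg _) _
  have hsummable : ∀ x : lp (fun _ : ℝ => ℂ) p, Summable fun r => (x r : ℂ) • v r := by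
    intro x
    rw [summable_iff_vanishing_norm]
    intro ε hε
    have hs : Summable fun r => ‖x r‖ ^ p.toReal := (lp.memℓp x).summable hpt
    obtain ⟨s, hs'⟩ := summable_iff_vanishing_norm.1 hs (ε ^ p.toReal)
      (Real.rpow_pos_of_pos hε _)
    refine ⟨s, fun t ht => ?_⟩
    rw [hnormsum t fun r => x r]
    have h1 : ∑ r ∈ t, ‖x r‖ ^ p.toReal < ε ^ p.toReal := by
      have h := hs' t ht
      rwa [Real.norm_eq_abs, abs_of_nonneg (sum_nonneg' x t)] at h
    have h2 := Real.rpow_lt_rpow (sum_nonneg' x t) h1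
      (by positivity : (0:ℝ) < 1 / p.toReal)
    rwa [← Real.rpow_mul hε.le, mul_one_div_cancel hpt.ne', Real.rpow_one] at h2
  refine ⟨⟨⟨fun x => ∑' r, (x r : ℂ) • v r, ?_⟩, ?_⟩, ?_⟩
  · intro x y
    dsimp only
    have hc : ∀ r : ℝ, (((x + y : lp (fun _ : ℝ => ℂ) p) r : ℂ)) • v r
        = (x r : ℂ) • v r + (y r : ℂ) • v r := by
      intro r
      rw [lp.coeFn_add, Pi.add_apply, add_smul]
    rw [tsum_congr hc, Summable.tsum_add (hsummable x) (hsummable y)]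
  · intro c x
    dsimp only
    have hc : ∀ r : ℝ, (((c • x : lp (fun _ : ℝ => ℂ) p) r : ℂ)) • v r
        = c • ((x r : ℂ) • v r) := by
      intro r
      rw [lp.coeFn_smul, Pi.smul_apply, smul_smul, smul_eq_mul]
    rw [tsum_congr hc, RingHom.id_apply, Summable.tsum_const_smul c (hsummable x)]
  · intro x
    dsimp only
    have h2 : Filter.Tendsto (fun F : Finset ℝ => ‖∑ r ∈ F, (x r : ℂ) • v r‖)
        Filter.atTop (𝓝 ‖∑' r, (x r : ℂ) • v r‖) := (hsummable x).hasSum.norm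
    have h3 : Filter.Tendsto (fun F : Finset ℝ => ∑ r ∈ F, ‖x r‖ ^ p.toReal)
        Filter.atTop (𝓝 (‖x‖ ^ p.toReal)) := lp.hasSum_norm hpt x
    have h4 : Filter.Tendsto
        (fun F : Finset ℝ => (∑ r ∈ F, ‖x r‖ ^ p.toReal) ^ (1 / p.toReal))
        Filter.atTop (𝓝 ((‖x‖ ^ p.toReal) ^ (1 / p.toReal))) :=
      ((Real.continuousAt_rpow_const _ _ (Or.inr (by positivity))).tendsto).comp h3
    have h5 : (fun F : Finset ℝ => ‖∑ r ∈ F, (x r : ℂ) • v r‖)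
        = fun F : Finset ℝ => (∑ r ∈ F, ‖x r‖ ^ p.toReal) ^ (1 / p.toReal) :=
      funext fun F => hnormsum F fun r => x r
    rw [h5] at h2
    have h6 := tendsto_nhds_unique h2 h4
    show ‖∑' r : ℝ, (x r : ℂ) • v r‖ = ‖x‖
    rw [h6, ← Real.rpow_mul (norm_nonneg x), mul_one_div_cancel hpt.ne', Real.rpow_one]
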